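/- Let G_K̃₀ ⊂ G_K̃₁ be two finite neighborhoods of G_K. Then the norms N_K̃₀ and N_K̃₁ (where N_K̃(f,φ)² = ‖(f,φ)‖²_{ℓ²(G_K̃)} + ‖D(f,φ)‖²_{ℓ²(G)}) are equivalent on the space of finitely supported pairs (f,φ): there is C > 0 with N_K̃₀ ≤ N_K̃₁ ≤ C·N_K̃₀. -/

import Mathlib

open scoped BigOperators
open Function Filter

structure WGraph (V : Type*) where
  E : Set (V × V)
  symm : ∀ e ∈ E, (e.2, e.1) ∈ E
  noloop : ∀ v : V, (v, v) ∉ E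
  c : V → ℝ
  r : V × V → ℝ
  cpos : ∀ v, 0 < c v
  rpos : ∀ e, 0 < r e
  rsymm : ∀ e : V × V, r (e.2, e.1) = r e
  locfin : ∀ v : V, {e : V × V | e ∈ E ∧ e.1 = v}.Finite

variable {V : Type*}

/-- The difference operator `(df)(e) = f(e⁺) - f(e⁻)`. -/
def dOp (f : V → ℝ) : V × V → ℝ := fun e => f e.2 - f e.1

/-- The coboundary operator `(δφ)(x) = (1/c x) Σ_{e ∈ E, e⁺ = x} r e * φ e`. -/
noncomputable def deltaOp (G : WGraph V) (φ : V × V → ℝ) : V → ℝ :=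
  fun x => (G.c x)⁻¹ * ∑ᶠ e ∈ {e : V × V | e ∈ G.E ∧ e.2 = x}, G.r e * φ e

/-- Skewsymmetric function on oriented edges. -/
def Skew (φ : V × V → ℝ) : Prop := ∀ e : V × V, φ (e.2, e.1) = -φ e

/-- Finitely supported function. -/
def FinSupp {α β : Type*} [Zero β] (f : α → β) : Prop := (Function.support f).Finite

/-- Connectedness of a graph: any two vertices joined by a path of edges. -/
def WGraph.Connected (G : WGraph V) : Prop :=
  ∀ x y : V, ∃ n : ℕ, ∃ p : ℕ → V, p 0 = x ∧ p n = y ∧ ∀ i < n, (p i, p (i + 1)) ∈ G.E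

/-- Inner product on vertex functions: `Σ_x c x * f x * g x`. -/
noncomputable def innerV (G : WGraph V) (f g : V → ℝ) : ℝ := ∑ᶠ x : V, G.c x * (f x * g x)

/-- Inner product on edge functions: `(1/2) Σ_{e ∈ E} r e * φ e * ψ e`. -/
noncomputable def innerE (G : WGraph V) (φ ψ : V × V → ℝ) : ℝ :=
  (1 / 2) * ∑ᶠ e ∈ G.E, G.r e * (φ e * ψ e)

/-- Squared ℓ² norm of the pair `(f, φ)` restricted to vertices in `S` and edges in `T`. -/
noncomputable def sqnormOn (G : WGraph V) (S : Set V) (T : Set (V × V)) (f : V → ℝ)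
    (φ : V × V → ℝ) : ℝ :=
  (∑ᶠ x ∈ S, G.c x * f x ^ 2) + (1 / 2) * ∑ᶠ e ∈ T, G.r e * φ e ^ 2

/-- Edges of the subgraph induced by `K`. -/
def EK (G : WGraph V) (K : Set V) : Set (V × V) := {e ∈ G.E | e.1 ∈ K ∧ e.2 ∈ K}

/-- Edge boundary of `K`: edges with exactly one endpoint in `K`. -/
def edgeBdry (G : WGraph V) (K : Set V) : Set (V × V) :=
  {e ∈ G.E | (e.1 ∈ K ∧ e.2 ∉ K) ∨ (e.1 ∉ K ∧ e.2 ∈ K)}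

/-- `D = d + δ` is non-parabolic at infinity with respect to the finite subgraph on `K`. -/
noncomputable def NonParabolicAt (G : WGraph V) (K : Set V) : Prop :=
  ∀ VU : Set V, ∀ EU : Set (V × V), VU.Finite → EU.Finite →
    VU ⊆ Kᶜ → EU ⊆ G.E \ EK G K →
    ∃ C > 0, ∀ f : V → ℝ, ∀ φ : V × V → ℝ,
      FinSupp f → FinSupp φ → Skew φ →
      Function.support f ⊆ Kᶜ → Function.support φ ⊆ G.E \ EK G K →
      C * Real.sqrt (sqnormOn G VU EU f φ) ≤
        Real.sqrt (sqnormOn G Kᶜ (G.E \ EK G K) (deltaOp G φ) (dOp f))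

/-- `(Kt, Et)` is a (finite-subgraph) neighborhood of the subgraph on `K`. -/
def IsNbhd (G : WGraph V) (K Kt : Set V) (Et : Set (V × V)) : Prop :=
  Kt.Finite ∧ Et.Finite ∧ K ⊆ Kt ∧ EK G K ∪ edgeBdry G K ⊆ Et ∧ Et ⊆ G.E ∧
    ∀ e ∈ Et, e.1 ∈ Kt ∧ e.2 ∈ Kt

/-- Existence of a cycle in the graph. -/
def HasCycle (G : WGraph V) : Prop :=
  ∃ n : ℕ, 3 ≤ n ∧ ∃ p : ℕ → V, p n = p 0 ∧
    (∀ i j : ℕ, i < n → j < n → p i = p j → i = j) ∧ ∀ i < n, (p i, p (i + 1)) ∈ G.E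

/-- The outward edges of generation `m` in the two binary subtrees (`Ev` and `Bv` sides)
emanating from the vertex `x₀` of the triadic tree. -/
def genEdges (x₀ : V) (Ev Bv : ℕ → ℕ → V) : ℕ → Set (V × V)
  | 0 => {(x₀, Ev 0 0), (x₀, Bv 0 0)}
  | m + 1 => {p | ∃ k, k < 2 ^ (m + 1) ∧
      (p = (Ev m (k / 2), Ev (m + 1) k) ∨ p = (Bv m (k / 2), Bv (m + 1) k))}

/-- A set of oriented edges together with all reversed edges. -/
def symEdges (S : Set (V × V)) : Set (V × V) := {p | p ∈ S ∨ (p.2, p.1) ∈ S}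

section Aux
lemma finsum_mem_nonneg' {α : Type*} {s : Set α} {f : α → ℝ} (h : ∀ i ∈ s, 0 ≤ f i) :
    0 ≤ ∑ᶠ i ∈ s, f i := by
  rw [finsum_mem_def]
  exact finsum_nonneg fun i => Set.indicator_nonneg h i

lemma finsum_mem_split {α : Type*} {s t : Set α} {f : α → ℝ} (hst : s ⊆ t)
    (ht : (t ∩ Function.support f).Finite) :
    ∑ᶠ i ∈ t, f i = (∑ᶠ i ∈ s, f i) + ∑ᶠ i ∈ t \ s, f i := by
  rw [← finsum_mem_union' disjoint_sdiff_self_right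
    (ht.subset (Set.inter_subset_inter_left _ hst))
    (ht.subset (Set.inter_subset_inter_left _ Set.diff_subset)),
    Set.union_diff_cancel hst]

lemma finsum_mem_mono_set {α : Type*} {s t : Set α} {f : α → ℝ} (hst : s ⊆ t)
    (h0 : ∀ i ∈ t, 0 ≤ f i) (ht : (t ∩ Function.support f).Finite) :
    ∑ᶠ i ∈ s, f i ≤ ∑ᶠ i ∈ t, f i := by
  rw [finsum_mem_split hst ht]
  exact le_add_of_nonneg_right (finsum_mem_nonneg' fun i hi => h0 i hi.1)

/-- Edges ending at a vertex form a finite set. -/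
lemma locfin2 (G : WGraph V) (v : V) : {e : V × V | e ∈ G.E ∧ e.2 = v}.Finite := by
  have : {e : V × V | e ∈ G.E ∧ e.2 = v} ⊆
      (fun e : V × V => (e.2, e.1)) '' {e : V × V | e ∈ G.E ∧ e.1 = v} := by
    rintro ⟨a, b⟩ ⟨he, rfl⟩
    exact ⟨(b, a), ⟨G.symm _ he, rfl⟩, rfl⟩
  exact ((G.locfin v).image _).subset this

/-- Edges with an endpoint in the support of a finitely supported function form a finite set. -/
lemma edges_touching_finite (G : WGraph V) {f : V → ℝ} (hf : FinSupp f) :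
    {e : V × V | e ∈ G.E ∧ (f e.1 ≠ 0 ∨ f e.2 ≠ 0)}.Finite := by
  have : {e : V × V | e ∈ G.E ∧ (f e.1 ≠ 0 ∨ f e.2 ≠ 0)} ⊆
      (⋃ v ∈ Function.support f, {e : V × V | e ∈ G.E ∧ e.1 = v}) ∪
      (⋃ v ∈ Function.support f, {e : V × V | e ∈ G.E ∧ e.2 = v}) := by
    rintro e ⟨he, h1 | h2⟩
    · exact Or.inl (Set.mem_biUnion h1 ⟨he, rfl⟩)
    · exact Or.inr (Set.mem_biUnion h2 ⟨he, rfl⟩)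
  exact ((hf.biUnion fun v _ => G.locfin v).union
    (hf.biUnion fun v _ => locfin2 G v)).subset this

/-- `δφ` is finitely supported when `φ` is. -/
lemma finSupp_deltaOp (G : WGraph V) {φ : V × V → ℝ} (hφ : FinSupp φ) :
    FinSupp (deltaOp G φ) := by
  apply (hφ.image Prod.snd).subset
  intro x hx
  simp only [deltaOp, Function.mem_support] at hx
  have hsum : ∑ᶠ e ∈ {e : V × V | e ∈ G.E ∧ e.2 = x}, G.r e * φ e ≠ 0 := by
    intro h; rw [h, mul_zero] at hx; exact hx rfl
  by_contra hmem
  apply hsum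
  apply finsum_mem_of_eqOn_zero
  intro e he
  have : φ e = 0 := by
    by_contra h
    exact hmem ⟨e, h, he.2⟩
  simp [this]

lemma sqnormOn_nonneg (G : WGraph V) (S : Set V) (T : Set (V × V)) (f : V → ℝ)
    (φ : V × V → ℝ) : 0 ≤ sqnormOn G S T f φ := by
  have h1 : 0 ≤ ∑ᶠ x ∈ S, G.c x * f x ^ 2 :=
    finsum_mem_nonneg' fun x _ => mul_nonneg (G.cpos x).le (sq_nonneg _)
  have h2 : 0 ≤ ∑ᶠ e ∈ T, G.r e * φ e ^ 2 :=
    finsum_mem_nonneg' fun e _ => mul_nonneg (G.rpos e).le (sq_nonneg _)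
  exact add_nonneg h1 (mul_nonneg (by norm_num) h2)

lemma single_le_finsum' {α : Type*} {s : Set α} {f : α → ℝ} {a : α} (ha : a ∈ s)
    (h0 : ∀ i ∈ s, 0 ≤ f i) (hs : (s ∩ Function.support f).Finite) :
    f a ≤ ∑ᶠ i ∈ s, f i := by
  have := finsum_mem_mono_set (Set.singleton_subset_iff.2 ha) h0 hs
  rwa [finsum_mem_singleton] at this

lemma suppV_sub (G : WGraph V) (f : V → ℝ) :
    Function.support (fun x => G.c x * f x ^ 2) ⊆ Function.support f := by
  intro x hx
  simp only [Function.mem_support] at hx ⊢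
  intro h; apply hx; simp [h]

lemma suppE_sub (G : WGraph V) (φ : V × V → ℝ) :
    Function.support (fun e => G.r e * φ e ^ 2) ⊆ Function.support φ := by
  intro e he
  simp only [Function.mem_support] at he ⊢
  intro h; apply he; simp [h]

lemma sqnormOn_split (G : WGraph V) {S S' : Set V} {T T' : Set (V × V)}
    (hS : S ⊆ S') (hT : T ⊆ T') {f : V → ℝ} {φ : V × V → ℝ}
    (hf : FinSupp f) (hφ : FinSupp φ) :
    sqnormOn G S' T' f φ = sqnormOn G S T f φ + sqnormOn G (S' \ S) (T' \ T) f φ := by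
  unfold sqnormOn
  rw [finsum_mem_split hS (hf.subset (Set.inter_subset_right.trans (suppV_sub G f))),
    finsum_mem_split hT (hφ.subset (Set.inter_subset_right.trans (suppE_sub G φ)))]
  ring

lemma sqnormOn_mono (G : WGraph V) {S S' : Set V} {T T' : Set (V × V)}
    (hS : S ⊆ S') (hT : T ⊆ T') {f : V → ℝ} {φ : V × V → ℝ}
    (hf : FinSupp f) (hφ : FinSupp φ) :
    sqnormOn G S T f φ ≤ sqnormOn G S' T' f φ := by
  rw [sqnormOn_split G hS hT hf hφ]
  exact le_add_of_nonneg_right (sqnormOn_nonneg G _ _ _ _)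

lemma diff_EK_swap (G : WGraph V) (K : Set V) {e : V × V} (he : e ∈ G.E \ EK G K) :
    (e.2, e.1) ∈ G.E \ EK G K := by
  refine ⟨G.symm e he.1, fun hm => he.2 ⟨he.1, hm.2.2, hm.2.1⟩⟩
/-- equivalence of the norms associated to two neighborhoods. -/
theorem stmt9 (G : WGraph V) [Infinite V] (hconn : G.Connected) (K : Set V)
    (hK : K.Finite) (hNP : NonParabolicAt G K) (Kt0 Kt1 : Set V)
    (Et0 Et1 : Set (V × V)) (h0 : IsNbhd G K Kt0 Et0) (h1 : IsNbhd G K Kt1 Et1)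
    (hsubV : Kt0 ⊆ Kt1) (hsubE : Et0 ⊆ Et1) :
    ∃ C > 0, ∀ f : V → ℝ, ∀ φ : V × V → ℝ,
      FinSupp f → FinSupp φ → Skew φ → Function.support φ ⊆ G.E →
      Real.sqrt (sqnormOn G Kt0 Et0 f φ +
          sqnormOn G Set.univ G.E (deltaOp G φ) (dOp f)) ≤
        Real.sqrt (sqnormOn G Kt1 Et1 f φ +
          sqnormOn G Set.univ G.E (deltaOp G φ) (dOp f)) ∧
      Real.sqrt (sqnormOn G Kt1 Et1 f φ +
          sqnormOn G Set.univ G.E (deltaOp G φ) (dOp f)) ≤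
        C * Real.sqrt (sqnormOn G Kt0 Et0 f φ +
          sqnormOn G Set.univ G.E (deltaOp G φ) (dOp f)) := by
  obtain ⟨hKt0f, hEt0f, hKK0, hBd0, hE0E, hEnd0⟩ := h0
  obtain ⟨hKt1f, hEt1f, hKK1, hBd1, hE1E, hEnd1⟩ := h1
  set VU : Set V := Kt1 \ Kt0 with hVUdef
  set EU : Set (V × V) := Et1 \ Et0 with hEUdef
  have hVUf : VU.Finite := hKt1f.subset Set.diff_subset
  have hEUf : EU.Finite := hEt1f.subset Set.diff_subset
  have hVUc : VU ⊆ Kᶜ := fun x hx hK' => hx.2 (hKK0 hK')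
  have hEUc : EU ⊆ G.E \ EK G K :=
    fun e he => ⟨hE1E he.1, fun hm => he.2 (hBd0 (Set.mem_union_left _ hm))⟩
  obtain ⟨C0, hC0, key⟩ := hNP VU EU hVUf hEUf hVUc hEUc
  -- boundary edges are finite
  have hBdf : (edgeBdry G K).Finite :=
    hEt0f.subset fun e he => hBd0 (Set.mem_union_right _ he)
  -- the correction constant coming from the boundary
  set M : ℝ := (1 / 2) * ∑ e ∈ hBdf.toFinset, (G.r e / G.c e.1 + G.r e / G.c e.2) with hMdef
  have hM : 0 ≤ M := by
    apply mul_nonneg (by norm_num)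
    apply Finset.sum_nonneg
    intro e _
    have h1 := (G.cpos e.1); have h2 := (G.cpos e.2); have h3 := (G.rpos e)
    positivity
  have hC2 : (0:ℝ) < C0 ^ 2 := by positivity
  set A : ℝ := 1 + (M + 1) / C0 ^ 2 with hAdef
  have hA : 0 < A := by
    have h' : 0 ≤ (M + 1) / C0 ^ 2 := div_nonneg (by linarith) hC2.le
    rw [hAdef]; linarith
  refine ⟨Real.sqrt A, Real.sqrt_pos.2 hA, ?_⟩
  intro f φ hf hφ hskew hsupφ
  set D2 : ℝ := sqnormOn G Set.univ G.E (deltaOp G φ) (dOp f) with hD2def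
  set N0 : ℝ := sqnormOn G Kt0 Et0 f φ with hN0def
  set N1 : ℝ := sqnormOn G Kt1 Et1 f φ with hN1def
  set X : ℝ := sqnormOn G VU EU f φ with hXdef
  have hN0nn : 0 ≤ N0 := sqnormOn_nonneg G _ _ _ _
  have hD2nn : 0 ≤ D2 := sqnormOn_nonneg G _ _ _ _
  have hXnn : 0 ≤ X := sqnormOn_nonneg G _ _ _ _
  have hsplit : N1 = N0 + X := sqnormOn_split G hsubV hsubE hf hφ
  constructor
  · apply Real.sqrt_le_sqrt
    have := sqnormOn_mono G hsubV hsubE hf hφ (S := Kt0) (S' := Kt1) (T := Et0) (T' := Et1)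
    linarith
  -- second inequality
  · -- cutoff functions
    set f' : V → ℝ := Kᶜ.indicator f with hf'def
    set φ' : (V × V) → ℝ := (G.E \ EK G K).indicator φ with hφ'def
    have hf' : FinSupp f' := hf.subset
      (by rw [hf'def, Set.support_indicator]; exact Set.inter_subset_right)
    have hφ' : FinSupp φ' := hφ.subset
      (by rw [hφ'def, Set.support_indicator]; exact Set.inter_subset_right)
    have hskew' : Skew φ' := by
      intro e
      by_cases h : e ∈ G.E \ EK G K
      · rw [hφ'def]
        rw [Set.indicator_of_mem (diff_EK_swap G K h), Set.indicator_of_mem h]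
        exact hskew e
      · have h' : (e.2, e.1) ∉ G.E \ EK G K := fun hc => h (diff_EK_swap G K hc)
        rw [hφ'def, Set.indicator_of_notMem h', Set.indicator_of_notMem h, neg_zero]
    have hsupf' : Function.support f' ⊆ Kᶜ := Set.support_indicator_subset
    have hsupφ' : Function.support φ' ⊆ G.E \ EK G K := Set.support_indicator_subset
    have hkey := key f' φ' hf' hφ' hskew' hsupf' hsupφ'
    -- the cutoff norm on VU, EU equals the original one
    have hXeq : sqnormOn G VU EU f' φ' = X := by
      rw [hXdef]
      unfold sqnormOn
      congr 1
      · exact finsum_mem_congr rfl fun x hx => by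
          rw [hf'def, Set.indicator_of_mem (hVUc hx)]
      · congr 1
        exact finsum_mem_congr rfl fun e he => by
          rw [hφ'def, Set.indicator_of_mem (hEUc he)]
    rw [hXeq] at hkey
    -- vertex part of the RHS of the key inequality
    have hdelta : ∀ x ∈ Kᶜ, deltaOp G φ' x = deltaOp G φ x := by
      intro x hx
      unfold deltaOp
      congr 1
      refine finsum_mem_congr rfl fun e he => ?_
      have hmem : e ∈ G.E \ EK G K := ⟨he.1, fun hm => hx (he.2 ▸ hm.2.2)⟩
      rw [hφ'def, Set.indicator_of_mem hmem]
    have hV : ∑ᶠ x ∈ (Kᶜ : Set V), G.c x * (deltaOp G φ' x) ^ 2 ≤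
        ∑ᶠ x ∈ (Set.univ : Set V), G.c x * (deltaOp G φ x) ^ 2 := by
      rw [finsum_mem_congr rfl (fun x hx => by rw [hdelta x hx])]
      apply finsum_mem_mono_set (Set.subset_univ _)
        (fun x _ => mul_nonneg (G.cpos x).le (sq_nonneg _))
      rw [Set.univ_inter]
      exact (finSupp_deltaOp G hφ).subset (suppV_sub G _)
    -- edge part: split into interior and boundary edges
    set W : Set (V × V) := {e | e ∈ G.E ∧ e.1 ∉ K ∧ e.2 ∉ K} with hWdef
    have hsplitE : G.E \ EK G K = W ∪ edgeBdry G K := by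
      ext e
      simp only [hWdef, Set.mem_diff, Set.mem_setOf_eq, Set.mem_union, EK, edgeBdry]
      tauto
    have hdisj : Disjoint W (edgeBdry G K) := by
      rw [Set.disjoint_left]
      rintro e ⟨-, h1, h2⟩ ⟨-, h | h⟩
      · exact h1 h.1
      · exact h2 h.2
    have hWfin : (W ∩ Function.support (fun e => G.r e * (dOp f' e) ^ 2)).Finite := by
      apply (edges_touching_finite G hf').subset
      rintro e ⟨hW, hsup⟩
      refine ⟨hW.1, ?_⟩
      by_contra h
      push_neg at h
      apply Function.mem_support.1 hsup
      simp [dOp, h.1, h.2]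
    have hBfin : ((edgeBdry G K) ∩ Function.support (fun e => G.r e * (dOp f' e) ^ 2)).Finite :=
      hBdf.subset Set.inter_subset_left
    set N0v : ℝ := ∑ᶠ x ∈ Kt0, G.c x * f x ^ 2 with hN0vdef
    have hN0vnn : 0 ≤ N0v :=
      finsum_mem_nonneg' fun x _ => mul_nonneg (G.cpos x).le (sq_nonneg _)
    have hN0vle : N0v ≤ N0 := by
      rw [hN0def]
      unfold sqnormOn
      have : 0 ≤ (1 / 2 : ℝ) * ∑ᶠ e ∈ Et0, G.r e * φ e ^ 2 :=
        mul_nonneg (by norm_num)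
          (finsum_mem_nonneg' fun e _ => mul_nonneg (G.rpos e).le (sq_nonneg _))
      linarith
    -- single-vertex bound
    have hsingle : ∀ x ∈ Kt0, G.c x * f x ^ 2 ≤ N0v := fun x hx =>
      single_le_finsum' hx (fun y _ => mul_nonneg (G.cpos y).le (sq_nonneg _))
        (hKt0f.subset Set.inter_subset_left)
    -- boundary edges: the cutoff differential is controlled by the norm on Kt0
    have hBterm : ∀ e ∈ hBdf.toFinset,
        G.r e * (dOp f' e) ^ 2 ≤ (G.r e / G.c e.1 + G.r e / G.c e.2) * N0v := by
      intro e he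
      rw [Set.Finite.mem_toFinset] at he
      have heEt0 : e ∈ Et0 := hBd0 (Set.mem_union_right _ he)
      have hend := hEnd0 e heEt0
      have hr := G.rpos e
      have hc1 := G.cpos e.1
      have hc2 := G.cpos e.2
      rcases he.2 with ⟨h1, h2⟩ | ⟨h1, h2⟩
      · -- e.1 ∈ K, e.2 ∉ K : dOp f' e = f e.2
        have : dOp f' e = f e.2 := by
          simp [dOp, hf'def, Set.indicator_of_mem (Set.mem_compl h2),
            Set.indicator_of_notMem (Set.notMem_compl_iff.2 h1)]
        rw [this]
        have hb := hsingle e.2 hend.2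
        have h1' : 0 ≤ G.r e / G.c e.1 * N0v := by positivity
        have : G.r e * f e.2 ^ 2 = (G.r e / G.c e.2) * (G.c e.2 * f e.2 ^ 2) := by
          field_simp
        rw [this, add_mul]
        have := mul_le_mul_of_nonneg_left hb (by positivity : (0:ℝ) ≤ G.r e / G.c e.2)
        linarith
      · -- e.1 ∉ K, e.2 ∈ K : dOp f' e = -f e.1
        have : dOp f' e = -f e.1 := by
          simp [dOp, hf'def, Set.indicator_of_mem (Set.mem_compl h1),
            Set.indicator_of_notMem (Set.notMem_compl_iff.2 h2)]
        rw [this]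
        have hb := hsingle e.1 hend.1
        have h2' : 0 ≤ G.r e / G.c e.2 * N0v := by positivity
        have : G.r e * (-f e.1) ^ 2 = (G.r e / G.c e.1) * (G.c e.1 * f e.1 ^ 2) := by
          field_simp
        rw [this, add_mul]
        have := mul_le_mul_of_nonneg_left hb (by positivity : (0:ℝ) ≤ G.r e / G.c e.1)
        linarith
    have hB : ∑ᶠ e ∈ edgeBdry G K, G.r e * (dOp f' e) ^ 2 ≤ 2 * M * N0v := by
      rw [← hBdf.coe_toFinset, finsum_mem_coe_finset]
      calc ∑ e ∈ hBdf.toFinset, G.r e * (dOp f' e) ^ 2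
          ≤ ∑ e ∈ hBdf.toFinset, (G.r e / G.c e.1 + G.r e / G.c e.2) * N0v :=
            Finset.sum_le_sum hBterm
        _ = 2 * M * N0v := by rw [hMdef, ← Finset.sum_mul]; ring
    have hWle : ∑ᶠ e ∈ W, G.r e * (dOp f' e) ^ 2 ≤ ∑ᶠ e ∈ G.E, G.r e * (dOp f e) ^ 2 := by
      have heq : ∑ᶠ e ∈ W, G.r e * (dOp f' e) ^ 2 = ∑ᶠ e ∈ W, G.r e * (dOp f e) ^ 2 := by
        refine finsum_mem_congr rfl fun e he => ?_
        have : dOp f' e = dOp f e := by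
          simp [dOp, hf'def, Set.indicator_of_mem (Set.mem_compl he.2.1),
            Set.indicator_of_mem (Set.mem_compl he.2.2)]
        rw [this]
      rw [heq]
      apply finsum_mem_mono_set (fun e he => he.1)
        (fun e _ => mul_nonneg (G.rpos e).le (sq_nonneg _))
      apply (edges_touching_finite G hf).subset
      rintro e ⟨hE, hsup⟩
      refine ⟨hE, ?_⟩
      by_contra h
      push_neg at h
      apply Function.mem_support.1 hsup
      simp [dOp, h.1, h.2]
    have hEpart : ∑ᶠ e ∈ G.E \ EK G K, G.r e * (dOp f' e) ^ 2 ≤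
        (∑ᶠ e ∈ G.E, G.r e * (dOp f e) ^ 2) + 2 * M * N0v := by
      rw [hsplitE, finsum_mem_union' hdisj hWfin hBfin]
      linarith
    -- combine into a bound on the RHS of the key inequality
    have hRHS : sqnormOn G Kᶜ (G.E \ EK G K) (deltaOp G φ') (dOp f') ≤ D2 + M * N0 := by
      rw [hD2def]
      unfold sqnormOn
      have h2M : (1/2 : ℝ) * (2 * M * N0v) = M * N0v := by ring
      have hMN : M * N0v ≤ M * N0 := mul_le_mul_of_nonneg_left hN0vle hM
      have hEhalf : (1/2 : ℝ) * ∑ᶠ e ∈ G.E \ EK G K, G.r e * (dOp f' e) ^ 2 ≤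
          (1/2 : ℝ) * (∑ᶠ e ∈ G.E, G.r e * (dOp f e) ^ 2) + M * N0v := by
        have := mul_le_mul_of_nonneg_left hEpart (by norm_num : (0:ℝ) ≤ 1/2)
        linarith [this]
      linarith [hV, hEhalf, hMN]
    -- square the key inequality
    have hZnn : 0 ≤ D2 + M * N0 := add_nonneg hD2nn (mul_nonneg hM hN0nn)
    have hXineq : C0 ^ 2 * X ≤ D2 + M * N0 := by
      have hsqrtle : C0 * Real.sqrt X ≤ Real.sqrt (D2 + M * N0) :=
        hkey.trans (Real.sqrt_le_sqrt hRHS)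
      have hsq := pow_le_pow_left₀ (mul_nonneg hC0.le (Real.sqrt_nonneg _)) hsqrtle 2
      rw [Real.sq_sqrt hZnn, mul_pow, Real.sq_sqrt hXnn] at hsq
      exact hsq
    -- final estimate
    have hA2 : C0 ^ 2 * A = C0 ^ 2 + (M + 1) := by
      have h' : (M + 1) / C0 ^ 2 * C0 ^ 2 = M + 1 := div_mul_cancel₀ _ hC2.ne'
      rw [hAdef]
      linear_combination h'
    have hfinal : N1 + D2 ≤ A * (N0 + D2) := by
      rw [← mul_le_mul_iff_right₀ hC2]
      have hAexp : C0 ^ 2 * (A * (N0 + D2)) =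
          C0 ^ 2 * (N0 + D2) + (M + 1) * (N0 + D2) := by
        linear_combination (N0 + D2) * hA2
      rw [hAexp, hsplit]
      linarith [hXineq, mul_nonneg hM hD2nn, hN0nn, hD2nn]
    calc Real.sqrt (N1 + D2) ≤ Real.sqrt (A * (N0 + D2)) := Real.sqrt_le_sqrt hfinal
      _ = Real.sqrt A * Real.sqrt (N0 + D2) := Real.sqrt_mul hA.le _
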